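/- arXiv:0706.1473 — 3 statements merged into one kernel-verified Lean document; each statement's English description precedes it below -/
import Mathlib

section
/- (Example 1: involutivity of the source Hamiltonians.) On ℝ⁴ with coordinates (q₁, q₂, p₁, p₂) and canonical Poisson bracket {f,g} = ∂f/∂q₁ ∂g/∂p₁ + ∂f/∂q₂ ∂g/∂p₂ − ∂f/∂p₁ ∂g/∂q₁ − ∂f/∂p₂ ∂g/∂q₂, let α ∈ ℝ and define on the open set { q₂ ≠ 0, p₂ ≠ 0 } the functions H₁ = ½ p₁² + ½ p₂² + α (q₁² − q₂²) p₂ / q₂ − 2 α² q₁² and H₂ = (q₁ p₂ − q₂ p₁ − 2 α q₁ q₂) / p₂. Then {H₁, H₂} = 0 at every point of { q₂ ≠ 0, p₂ ≠ 0 }. -/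
open scoped BigOperators

/-- The canonical Poisson bracket on `ℝ⁴ = (ℝ²)_q × (ℝ²)_p` with coordinates
`(q₁,q₂,p₁,p₂)`, where `q_i = x.1 (i-1)` and `p_i = x.2 (i-1)`. -/
noncomputable def pb (f g : ((Fin 2 → ℝ) × (Fin 2 → ℝ)) → ℝ)
    (x : (Fin 2 → ℝ) × (Fin 2 → ℝ)) : ℝ :=
  ∑ i : Fin 2,
    (fderiv ℝ f x (Pi.single i 1, 0) * fderiv ℝ g x (0, Pi.single i 1) -
      fderiv ℝ f x (0, Pi.single i 1) * fderiv ℝ g x (Pi.single i 1, 0))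

/-- Example 1: involutivity of the source Hamiltonians:
`{H₁, H₂} = 0` on `{q₂ ≠ 0, p₂ ≠ 0}`, where
`H₁ = ½p₁² + ½p₂² + α(q₁² − q₂²)p₂/q₂ − 2α²q₁²` and
`H₂ = (q₁p₂ − q₂p₁ − 2αq₁q₂)/p₂`. -/
theorem stmt_15 (α : ℝ) (x : (Fin 2 → ℝ) × (Fin 2 → ℝ))
    (hq2 : x.1 1 ≠ 0) (hp2 : x.2 1 ≠ 0) :
    pb (fun y => (1/2) * (y.2 0)^2 + (1/2) * (y.2 1)^2 +
          α * ((y.1 0)^2 - (y.1 1)^2) * y.2 1 / y.1 1 - 2 * α^2 * (y.1 0)^2)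
       (fun y => (y.1 0 * y.2 1 - y.1 1 * y.2 0 - 2 * α * y.1 0 * y.1 1) / y.2 1)
       x = 0 := by
  have hq0 : HasFDerivAt (fun y : (Fin 2 → ℝ) × (Fin 2 → ℝ) => y.1 0)
      ((ContinuousLinearMap.proj 0).comp (ContinuousLinearMap.fst ℝ (Fin 2 → ℝ) (Fin 2 → ℝ))) x :=
    ((ContinuousLinearMap.proj 0).comp (ContinuousLinearMap.fst ℝ (Fin 2 → ℝ) (Fin 2 → ℝ))).hasFDerivAt
  have hq1 : HasFDerivAt (fun y : (Fin 2 → ℝ) × (Fin 2 → ℝ) => y.1 1)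
      ((ContinuousLinearMap.proj 1).comp (ContinuousLinearMap.fst ℝ (Fin 2 → ℝ) (Fin 2 → ℝ))) x :=
    ((ContinuousLinearMap.proj 1).comp (ContinuousLinearMap.fst ℝ (Fin 2 → ℝ) (Fin 2 → ℝ))).hasFDerivAt
  have hp0 : HasFDerivAt (fun y : (Fin 2 → ℝ) × (Fin 2 → ℝ) => y.2 0)
      ((ContinuousLinearMap.proj 0).comp (ContinuousLinearMap.snd ℝ (Fin 2 → ℝ) (Fin 2 → ℝ))) x :=
    ((ContinuousLinearMap.proj 0).comp (ContinuousLinearMap.snd ℝ (Fin 2 → ℝ) (Fin 2 → ℝ))).hasFDerivAt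
  have hp1 : HasFDerivAt (fun y : (Fin 2 → ℝ) × (Fin 2 → ℝ) => y.2 1)
      ((ContinuousLinearMap.proj 1).comp (ContinuousLinearMap.snd ℝ (Fin 2 → ℝ) (Fin 2 → ℝ))) x :=
    ((ContinuousLinearMap.proj 1).comp (ContinuousLinearMap.snd ℝ (Fin 2 → ℝ) (Fin 2 → ℝ))).hasFDerivAt
  have hiq1 : HasFDerivAt (fun y : (Fin 2 → ℝ) × (Fin 2 → ℝ) => (y.1 1)⁻¹)
      (((1 : ℝ →L[ℝ] ℝ).smulRight (-(x.1 1 ^ 2)⁻¹)).comp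
        ((ContinuousLinearMap.proj 1).comp (ContinuousLinearMap.fst ℝ (Fin 2 → ℝ) (Fin 2 → ℝ)))) x :=
    (hasFDerivAt_inv hq2).comp x hq1
  have hip1 : HasFDerivAt (fun y : (Fin 2 → ℝ) × (Fin 2 → ℝ) => (y.2 1)⁻¹)
      (((1 : ℝ →L[ℝ] ℝ).smulRight (-(x.2 1 ^ 2)⁻¹)).comp
        ((ContinuousLinearMap.proj 1).comp (ContinuousLinearMap.snd ℝ (Fin 2 → ℝ) (Fin 2 → ℝ)))) x :=
    (hasFDerivAt_inv hp2).comp x hp1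
  have hH1 := ((((hp0.mul hp0).const_mul ((1:ℝ) * 2⁻¹)).add ((hp1.mul hp1).const_mul ((1:ℝ) * 2⁻¹))).add
      (((((hq0.mul hq0).sub (hq1.mul hq1)).const_mul α).mul hp1).mul hiq1)).sub
      ((hq0.mul hq0).const_mul (2 * (α * α)))
  have hH2 := (((hq0.mul hp1).sub (hq1.mul hp0)).sub
      ((hq0.const_mul (2 * α)).mul hq1)).mul hip1
  simp only [pb, Fin.sum_univ_two, pow_two, div_eq_mul_inv]
  erw [hH1.fderiv, hH2.fderiv]
  simp only [ContinuousLinearMap.add_apply, ContinuousLinearMap.sub_apply,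
    ContinuousLinearMap.smul_apply, ContinuousLinearMap.comp_apply,
    ContinuousLinearMap.proj_apply, ContinuousLinearMap.coe_fst',
    ContinuousLinearMap.coe_snd', ContinuousLinearMap.smulRight_apply, ContinuousLinearMap.one_apply, ContinuousLinearMap.coe_smul', Pi.smul_apply,
    smul_eq_mul, Pi.mul_apply, Pi.sub_apply, Pi.single_eq_same, ne_eq, Pi.single_eq_of_ne (by decide : (0:Fin 2) ≠ 1),
    Pi.single_eq_of_ne (by decide : (1:Fin 2) ≠ 0), Pi.zero_apply]
  field_simp
  ring
end

section
/- (Example 1: involutivity of the Stäckel-transformed Hamiltonians.) On ℝ⁴ with coordinates (q₁, q₂, p₁, p₂) and canonical Poisson bracket, let α̃ ∈ ℝ and define on the open set { q₁ ≠ 0, q₂ ≠ 0 } the functions H̃₁ = ((q₁² + q₂² − 2 α̃ q₁)/(2 q₁ q₂)) p₁ p₂ + (α̃ (q₁² − α̃ q₁ + q₂²)/(2 q₁ q₂²)) p₂² and H̃₂ = (q₁ p₂ − q₂ p₁ − α̃ p₂)/(2 q₁ q₂). Then {H̃₁, H̃₂} = 0 at every point of { q₁ ≠ 0, q₂ ≠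 0 }. -/
open scoped BigOperators

private lemma hasFDerivAt_sq {E : Type*} [NormedAddCommGroup E] [NormedSpace ℝ E]
    {f : E → ℝ} {f' : E →L[ℝ] ℝ} {x : E} (h : HasFDerivAt f f' x) :
    HasFDerivAt (fun y => f y ^ 2) (f x • f' + f x • f') x := by
  rw [show (fun y => f y ^ 2) = f * f from funext fun y => pow_two _]
  exact h.mul h

private lemma my_hasFDerivAt_div {E : Type*} [NormedAddCommGroup E] [NormedSpace ℝ E]
    {f g : E → ℝ} {f' g' : E →L[ℝ] ℝ} {x : E}
    (hf : HasFDerivAt f f' x) (hg : HasFDerivAt g g' x) (hx : g x ≠ 0) :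
    HasFDerivAt (fun y => f y / g y) (f x • (-(g x ^ 2)⁻¹ • g') + (g x)⁻¹ • f') x := by
  have h1 : HasFDerivAt (fun y => (g y)⁻¹) (-(g x ^ 2)⁻¹ • g') x := by
    have h := (hasFDerivAt_inv hx).comp x hg
    refine h.congr_fderiv ?_
    ext v
    simp [mul_comm]
  rw [show (fun y => f y / g y) = f * (fun y => (g y)⁻¹) from funext fun y => div_eq_mul_inv _ _]
  exact hf.mul h1

set_option maxHeartbeats 4000000 in
/-- Example 1: involutivity of the Stäckel-transformed Hamiltonians:
`{H̃₁, H̃₂} = 0` on `{q₁ ≠ 0, q₂ ≠ 0}`, where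
`H̃₁ = ((q₁² + q₂² − 2α̃q₁)/(2q₁q₂)) p₁p₂ + (α̃(q₁² − α̃q₁ + q₂²)/(2q₁q₂²)) p₂²` and
`H̃₂ = (q₁p₂ − q₂p₁ − α̃p₂)/(2q₁q₂)`. -/
theorem stmt_16 (αt : ℝ) (x : (Fin 2 → ℝ) × (Fin 2 → ℝ))
    (hq1 : x.1 0 ≠ 0) (hq2 : x.1 1 ≠ 0) :
    pb (fun y => (((y.1 0)^2 + (y.1 1)^2 - 2 * αt * y.1 0) / (2 * y.1 0 * y.1 1)) *
          y.2 0 * y.2 1 +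
          (αt * ((y.1 0)^2 - αt * y.1 0 + (y.1 1)^2) / (2 * y.1 0 * (y.1 1)^2)) *
          (y.2 1)^2)
       (fun y => (y.1 0 * y.2 1 - y.1 1 * y.2 0 - αt * y.2 1) / (2 * y.1 0 * y.1 1))
       x = 0 := by
  classical
  have hQ1 : HasFDerivAt (fun y : (Fin 2 → ℝ) × (Fin 2 → ℝ) => y.1 0)
      ((ContinuousLinearMap.proj 0).comp (ContinuousLinearMap.fst ℝ (Fin 2 → ℝ) (Fin 2 → ℝ))) x :=
    ContinuousLinearMap.hasFDerivAt
      ((ContinuousLinearMap.proj 0).comp (ContinuousLinearMap.fst ℝ (Fin 2 → ℝ) (Fin 2 → ℝ)))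
  have hQ2 : HasFDerivAt (fun y : (Fin 2 → ℝ) × (Fin 2 → ℝ) => y.1 1)
      ((ContinuousLinearMap.proj 1).comp (ContinuousLinearMap.fst ℝ (Fin 2 → ℝ) (Fin 2 → ℝ))) x :=
    ContinuousLinearMap.hasFDerivAt
      ((ContinuousLinearMap.proj 1).comp (ContinuousLinearMap.fst ℝ (Fin 2 → ℝ) (Fin 2 → ℝ)))
  have hP1 : HasFDerivAt (fun y : (Fin 2 → ℝ) × (Fin 2 → ℝ) => y.2 0)
      ((ContinuousLinearMap.proj 0).comp (ContinuousLinearMap.snd ℝ (Fin 2 → ℝ) (Fin 2 → ℝ))) x :=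
    ContinuousLinearMap.hasFDerivAt
      ((ContinuousLinearMap.proj 0).comp (ContinuousLinearMap.snd ℝ (Fin 2 → ℝ) (Fin 2 → ℝ)))
  have hP2 : HasFDerivAt (fun y : (Fin 2 → ℝ) × (Fin 2 → ℝ) => y.2 1)
      ((ContinuousLinearMap.proj 1).comp (ContinuousLinearMap.snd ℝ (Fin 2 → ℝ) (Fin 2 → ℝ))) x :=
    ContinuousLinearMap.hasFDerivAt
      ((ContinuousLinearMap.proj 1).comp (ContinuousLinearMap.snd ℝ (Fin 2 → ℝ) (Fin 2 → ℝ)))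
  have hden1 : (2 : ℝ) * x.1 0 * x.1 1 ≠ 0 := by positivity
  have hden2 : (2 : ℝ) * x.1 0 * (x.1 1) ^ 2 ≠ 0 := by positivity
  -- H1
  have hnum1 : HasFDerivAt
      (fun y : (Fin 2 → ℝ) × (Fin 2 → ℝ) => (y.1 0)^2 + (y.1 1)^2 - 2 * αt * y.1 0) _ x :=
    ((hasFDerivAt_sq hQ1).add (hasFDerivAt_sq hQ2)).sub (hQ1.const_mul (2 * αt))
  have hd1 : HasFDerivAt (fun y : (Fin 2 → ℝ) × (Fin 2 → ℝ) => 2 * y.1 0 * y.1 1) _ x :=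
    (hQ1.const_mul 2).mul hQ2
  have hnum2 : HasFDerivAt
      (fun y : (Fin 2 → ℝ) × (Fin 2 → ℝ) => αt * ((y.1 0)^2 - αt * y.1 0 + (y.1 1)^2)) _ x :=
    (((hasFDerivAt_sq hQ1).sub (hQ1.const_mul αt)).add (hasFDerivAt_sq hQ2)).const_mul αt
  have hd2 : HasFDerivAt (fun y : (Fin 2 → ℝ) × (Fin 2 → ℝ) => 2 * y.1 0 * (y.1 1)^2) _ x :=
    (hQ1.const_mul 2).mul (hasFDerivAt_sq hQ2)
  have hH1 : HasFDerivAt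
      (fun y : (Fin 2 → ℝ) × (Fin 2 → ℝ) =>
        (((y.1 0)^2 + (y.1 1)^2 - 2 * αt * y.1 0) / (2 * y.1 0 * y.1 1)) * y.2 0 * y.2 1 +
          (αt * ((y.1 0)^2 - αt * y.1 0 + (y.1 1)^2) / (2 * y.1 0 * (y.1 1)^2)) * (y.2 1)^2) _ x :=
    ((((my_hasFDerivAt_div hnum1 hd1 hden1).mul hP1).mul hP2).add ((my_hasFDerivAt_div hnum2 hd2 hden2).mul (hasFDerivAt_sq hP2)))
  -- H2
  have hH2 : HasFDerivAt
      (fun y : (Fin 2 → ℝ) × (Fin 2 → ℝ) =>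
        (y.1 0 * y.2 1 - y.1 1 * y.2 0 - αt * y.2 1) / (2 * y.1 0 * y.1 1)) _ x :=
    my_hasFDerivAt_div (((hQ1.mul hP2).sub (hQ2.mul hP1)).sub (hP2.const_mul αt)) hd1 hden1
  rw [pb, Fin.sum_univ_two, hH1.fderiv, hH2.fderiv]
  simp only [ContinuousLinearMap.add_apply, ContinuousLinearMap.sub_apply,
    ContinuousLinearMap.smul_apply, ContinuousLinearMap.comp_apply,
    ContinuousLinearMap.coe_fst', ContinuousLinearMap.coe_snd',
    ContinuousLinearMap.proj_apply, smul_eq_mul, Pi.mul_apply]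
  simp only [Pi.single_eq_same, ne_eq, Fin.zero_eq_one_iff, Fin.one_eq_zero_iff,
    Pi.single_eq_of_ne (by decide : (1 : Fin 2) ≠ 0),
    Pi.single_eq_of_ne (by decide : (0 : Fin 2) ≠ 1), Prod.fst_zero, Prod.snd_zero,
    Pi.zero_apply]
  field_simp
  ring
end

section
/- (Example 2: involutivity of the extended Hénon–Heiles Hamiltonians.) On ℝ⁴ with coordinates (q₁, q₂, p₁, p₂) and canonical Poisson bracket, let α₁, α₂ ∈ ℝ and define H₁ = ½ p₁² + ½ p₂² − α₁ (q₁³ + q₁ q₂²/2) − α₂ q₁ and H₂ = ½ q₂ p₁ p₂ − ½ q₁ p₂² − α₁ (q₂⁴/16 + q₁² q₂²/4) − α₂ q₂²/4. Then {H₁, H₂} = 0 everywhere on ℝ⁴. -/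
open scoped BigOperators

namespace Stmt17Aux

abbrev E := (Fin 2 → ℝ) × (Fin 2 → ℝ)

noncomputable def Q (i : Fin 2) : E →L[ℝ] ℝ :=
  (ContinuousLinearMap.proj i).comp (ContinuousLinearMap.fst ℝ (Fin 2 → ℝ) (Fin 2 → ℝ))

noncomputable def P (i : Fin 2) : E →L[ℝ] ℝ :=
  (ContinuousLinearMap.proj i).comp (ContinuousLinearMap.snd ℝ (Fin 2 → ℝ) (Fin 2 → ℝ))

lemma hq (i : Fin 2) (x : E) : HasFDerivAt (fun y : E => y.1 i) (Q i) x :=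
  (Q i).hasFDerivAt

lemma hp (i : Fin 2) (x : E) : HasFDerivAt (fun y : E => y.2 i) (P i) x :=
  (P i).hasFDerivAt

variable {f : E → ℝ} {f' : E →L[ℝ] ℝ} {x : E}

lemma hpow2 (h : HasFDerivAt f f' x) :
    HasFDerivAt (fun y => f y ^ 2) ((2 * f x) • f') x := by
  have H := h.fun_mul h
  rw [show (fun y => f y ^ 2) = fun y => f y * f y from funext fun y => pow_two _]
  refine H.congr_fderiv ?_
  refine ContinuousLinearMap.ext fun v => ?_
  simp only [ContinuousLinearMap.add_apply, ContinuousLinearMap.smul_apply, smul_eq_mul]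
  ring

lemma hpow3 (h : HasFDerivAt f f' x) :
    HasFDerivAt (fun y => f y ^ 3) ((3 * f x ^ 2) • f') x := by
  have H := (hpow2 h).fun_mul h
  rw [show (fun y => f y ^ 3) = fun y => f y ^ 2 * f y from
    funext fun y => by ring]
  refine H.congr_fderiv ?_
  refine ContinuousLinearMap.ext fun v => ?_
  simp only [ContinuousLinearMap.add_apply, ContinuousLinearMap.smul_apply, smul_eq_mul]
  ring

lemma hpow4 (h : HasFDerivAt f f' x) :
    HasFDerivAt (fun y => f y ^ 4) ((4 * f x ^ 3) • f') x := by
  have H := (hpow3 h).fun_mul h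
  rw [show (fun y => f y ^ 4) = fun y => f y ^ 3 * f y from
    funext fun y => by ring]
  refine H.congr_fderiv ?_
  refine ContinuousLinearMap.ext fun v => ?_
  simp only [ContinuousLinearMap.add_apply, ContinuousLinearMap.smul_apply, smul_eq_mul]
  ring

lemma hdivc (h : HasFDerivAt f f' x) (c : ℝ) :
    HasFDerivAt (fun y => f y / c) (c⁻¹ • f') x := by
  simpa [div_eq_mul_inv, smul_smul, mul_comm] using h.mul_const c⁻¹

end Stmt17Aux

open Stmt17Aux in
/-- Example 2: involutivity of the extended Hénon–Heiles
Hamiltonians: `{H₁, H₂} = 0` everywhere on `ℝ⁴`, where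
`H₁ = ½p₁² + ½p₂² − α₁(q₁³ + q₁q₂²/2) − α₂q₁` and
`H₂ = ½q₂p₁p₂ − ½q₁p₂² − α₁(q₂⁴/16 + q₁²q₂²/4) − α₂q₂²/4`. -/
theorem stmt_17 (α₁ α₂ : ℝ) (x : (Fin 2 → ℝ) × (Fin 2 → ℝ)) :
    pb (fun y => (1/2) * (y.2 0)^2 + (1/2) * (y.2 1)^2 -
          α₁ * ((y.1 0)^3 + y.1 0 * (y.1 1)^2 / 2) - α₂ * y.1 0)
       (fun y => (1/2) * y.1 1 * y.2 0 * y.2 1 - (1/2) * y.1 0 * (y.2 1)^2 -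
          α₁ * ((y.1 1)^4 / 16 + (y.1 0)^2 * (y.1 1)^2 / 4) - α₂ * (y.1 1)^2 / 4)
       x = 0 := by
  have a1 := ((hpow2 (hp 0 x)).const_mul (1/2:ℝ)).add ((hpow2 (hp 1 x)).const_mul (1/2:ℝ))
  have a2 := ((hpow3 (hq 0 x)).add (hdivc ((hq 0 x).mul (hpow2 (hq 1 x))) 2)).const_mul α₁
  have h1 : HasFDerivAt
      (fun y : E => (1/2) * (y.2 0)^2 + (1/2) * (y.2 1)^2 -
          α₁ * ((y.1 0)^3 + y.1 0 * (y.1 1)^2 / 2) - α₂ * y.1 0) _ x :=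
    (a1.sub a2).sub ((hq 0 x).const_mul α₂)
  have b1 := ((((hq 1 x).const_mul (1/2:ℝ)).mul (hp 0 x)).mul (hp 1 x)).sub
      (((hq 0 x).const_mul (1/2:ℝ)).mul (hpow2 (hp 1 x)))
  have b2 := ((hdivc (hpow4 (hq 1 x)) 16).add
      (hdivc ((hpow2 (hq 0 x)).mul (hpow2 (hq 1 x))) 4)).const_mul α₁
  have b3 := hdivc ((hpow2 (hq 1 x)).const_mul α₂) 4
  have h2 : HasFDerivAt
      (fun y : E => (1/2) * y.1 1 * y.2 0 * y.2 1 - (1/2) * y.1 0 * (y.2 1)^2 -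
          α₁ * ((y.1 1)^4 / 16 + (y.1 0)^2 * (y.1 1)^2 / 4) - α₂ * (y.1 1)^2 / 4) _ x :=
    (b1.sub b2).sub b3
  rw [pb, h1.fderiv, h2.fderiv]
  simp only [Fin.sum_univ_two, ContinuousLinearMap.sub_apply, ContinuousLinearMap.add_apply,
    ContinuousLinearMap.smul_apply, ContinuousLinearMap.coe_smul', Pi.smul_apply,
    Stmt17Aux.Q, Stmt17Aux.P, ContinuousLinearMap.comp_apply, ContinuousLinearMap.coe_fst',
    ContinuousLinearMap.coe_snd', ContinuousLinearMap.proj_apply, smul_eq_mul,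
    Pi.single_apply]
  norm_num
  ring
end
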